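/- Local solvability defining the map 𝓕 of Section 2 of the paper: There exist constants σ > 0, r > 0 and r' > 0 with the following property. For every symmetric 3 × 3 real matrix Q with ‖Q − 1‖ ≤ σ and every symmetric 3 × 3 real matrix S with ‖S‖ ≤ r, there exists a unique symmetric 3 × 3 real matrix A with ‖A‖ ≤ r' such that Q·A + A·Q + A·Q·A = S. -/

import Mathlib

open Matrix

attribute [local instance] Matrix.normedAddCommGroup
attribute [local instance] Matrix.normedSpace

private lemma norm_mul_le3 (A B : Matrix (Fin 3) (Fin 3) ℝ) :
    ‖A * B‖ ≤ 3 * ‖A‖ * ‖B‖ := by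
  rw [Matrix.norm_le_iff (by positivity)]
  intro i j
  rw [Matrix.mul_apply]
  calc ‖∑ k, A i k * B k j‖ ≤ ∑ k, ‖A i k * B k j‖ := norm_sum_le _ _
    _ ≤ ∑ _k : Fin 3, ‖A‖ * ‖B‖ := by
        refine Finset.sum_le_sum fun k _ => ?_
        rw [norm_mul]
        exact mul_le_mul (Matrix.norm_entry_le_entrywise_sup_norm A)
          (Matrix.norm_entry_le_entrywise_sup_norm B) (norm_nonneg _) (norm_nonneg _)
    _ = 3 * ‖A‖ * ‖B‖ := by
        simp [Finset.sum_const]; ring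

private lemma norm_one_le3 : ‖(1 : Matrix (Fin 3) (Fin 3) ℝ)‖ ≤ 1 := by
  rw [Matrix.norm_le_iff (by norm_num)]
  intro i j
  rw [Matrix.one_apply]
  split <;> simp

/-- Local solvability defining the map `𝓕` of Section 2: there are `σ, r, r' > 0` such
that for every symmetric `Q` with `‖Q - 1‖ ≤ σ` and every symmetric `S` with `‖S‖ ≤ r`
there is a unique symmetric `A` with `‖A‖ ≤ r'` solving `Q·A + A·Q + A·Q·A = S`. -/
theorem local_solvability_F :
    ∃ σ > (0 : ℝ), ∃ r > (0 : ℝ), ∃ r' > (0 : ℝ),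
      ∀ Q S : Matrix (Fin 3) (Fin 3) ℝ,
        Qᵀ = Q → ‖Q - 1‖ ≤ σ → Sᵀ = S → ‖S‖ ≤ r →
        ∃! A : Matrix (Fin 3) (Fin 3) ℝ,
          Aᵀ = A ∧ ‖A‖ ≤ r' ∧ Q * A + A * Q + A * Q * A = S := by
  refine ⟨1/100, by norm_num, 1/100, by norm_num, 1/100, by norm_num, ?_⟩
  intro Q S hQ hQσ hS hSr
  have hQn : ‖Q‖ ≤ 101/100 := by
    calc ‖Q‖ = ‖(Q - 1) + 1‖ := by rw [sub_add_cancel]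
      _ ≤ ‖Q - 1‖ + ‖(1 : Matrix (Fin 3) (Fin 3) ℝ)‖ := norm_add_le _ _
      _ ≤ 101/100 := by linarith [norm_one_le3]
  -- the fixed-point map
  set f : Matrix (Fin 3) (Fin 3) ℝ → Matrix (Fin 3) (Fin 3) ℝ :=
    fun A => (1/2 : ℝ) • (S - (Q - 1) * A - A * (Q - 1) - A * Q * A) with hf
  -- A solves the equation iff it is a fixed point of f
  have hiff : ∀ A : Matrix (Fin 3) (Fin 3) ℝ,
      (Q * A + A * Q + A * Q * A = S) ↔ f A = A := by
    intro A
    have key : f A - A = (1/2 : ℝ) • (S - (Q * A + A * Q + A * Q * A)) := by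
      simp only [hf, mul_sub, sub_mul, one_mul, mul_one]
      module
    constructor
    · intro h
      have : f A - A = 0 := by rw [key, h]; simp
      exact sub_eq_zero.mp this
    · intro h
      have h0 : (1/2 : ℝ) • (S - (Q * A + A * Q + A * Q * A)) = 0 := by
        rw [← key, h]; simp
      have := (smul_eq_zero.mp h0).resolve_left (by norm_num)
      have := sub_eq_zero.mp this
      exact this.symm
  -- the closed set of symmetric matrices in the small ball
  set K : Set (Matrix (Fin 3) (Fin 3) ℝ) := {A | Aᵀ = A ∧ ‖A‖ ≤ 1/100} with hKdef
  have hKc : IsClosed K := by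
    apply IsClosed.inter
    · exact isClosed_eq (Continuous.matrix_transpose continuous_id) continuous_id
    · exact isClosed_le continuous_norm continuous_const
  -- f maps K into K
  have hmaps : ∀ A ∈ K, f A ∈ K := by
    rintro A ⟨hAs, hAn⟩
    constructor
    · show (f A)ᵀ = f A
      simp only [hf]
      rw [Matrix.transpose_smul, Matrix.transpose_sub, Matrix.transpose_sub,
        Matrix.transpose_sub, Matrix.transpose_mul, Matrix.transpose_mul,
        Matrix.transpose_mul, Matrix.transpose_mul, Matrix.transpose_sub,
        Matrix.transpose_one, hQ, hS, hAs, ← Matrix.mul_assoc]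
      congr 1
      abel
    · show ‖f A‖ ≤ 1/100
      have b1 : ‖(Q - 1) * A‖ ≤ 3/10000 := by
        have := norm_mul_le3 (Q - 1) A
        nlinarith [norm_nonneg (Q - 1), norm_nonneg A]
      have b2 : ‖A * (Q - 1)‖ ≤ 3/10000 := by
        have := norm_mul_le3 A (Q - 1)
        nlinarith [norm_nonneg (Q - 1), norm_nonneg A]
      have bAQ : ‖A * Q‖ ≤ 303/10000 := by
        have := norm_mul_le3 A Q
        nlinarith [norm_nonneg Q, norm_nonneg A]
      have b3 : ‖A * Q * A‖ ≤ 909/1000000 := by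
        have := norm_mul_le3 (A * Q) A
        nlinarith [norm_nonneg (A * Q), norm_nonneg A]
      have t : ‖S - (Q - 1) * A - A * (Q - 1) - A * Q * A‖
          ≤ ‖S‖ + ‖(Q - 1) * A‖ + ‖A * (Q - 1)‖ + ‖A * Q * A‖ := by
        calc ‖S - (Q - 1) * A - A * (Q - 1) - A * Q * A‖
            ≤ ‖S - (Q - 1) * A - A * (Q - 1)‖ + ‖A * Q * A‖ := norm_sub_le _ _
          _ ≤ (‖S - (Q - 1) * A‖ + ‖A * (Q - 1)‖) + ‖A * Q * A‖ := by
              gcongr; exact norm_sub_le _ _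
          _ ≤ (‖S‖ + ‖(Q - 1) * A‖ + ‖A * (Q - 1)‖) + ‖A * Q * A‖ := by
              gcongr; exact norm_sub_le _ _
      simp only [hf]
      rw [norm_smul, Real.norm_eq_abs]
      have habs : |(1/2 : ℝ)| = 1/2 := by norm_num
      rw [habs]
      linarith
  -- f is a contraction on K
  have hlip : ∀ A ∈ K, ∀ B ∈ K, ‖f A - f B‖ ≤ (1/4) * ‖A - B‖ := by
    rintro A ⟨hAs, hAn⟩ B ⟨hBs, hBn⟩
    have hdiff : f A - f B = (1/2 : ℝ) •
        ((Q - 1) * (B - A) + (B - A) * (Q - 1) + ((B - A) * Q * B + A * Q * (B - A))) := by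
      simp only [hf, mul_sub, sub_mul, one_mul, mul_one]
      module
    have c1 : ‖(Q - 1) * (B - A)‖ ≤ (3/100) * ‖B - A‖ := by
      have := norm_mul_le3 (Q - 1) (B - A)
      nlinarith [norm_nonneg (B - A), norm_nonneg (Q - 1)]
    have c2 : ‖(B - A) * (Q - 1)‖ ≤ (3/100) * ‖B - A‖ := by
      have := norm_mul_le3 (B - A) (Q - 1)
      nlinarith [norm_nonneg (B - A), norm_nonneg (Q - 1)]
    have c3 : ‖(B - A) * Q * B‖ ≤ (909/10000) * ‖B - A‖ := by
      have t1 := norm_mul_le3 ((B - A) * Q) B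
      have t2 := norm_mul_le3 (B - A) Q
      nlinarith [norm_nonneg ((B - A) * Q), norm_nonneg (B - A), norm_nonneg Q,
        norm_nonneg B]
    have cAQ : ‖A * Q‖ ≤ 303/10000 := by
      have := norm_mul_le3 A Q
      nlinarith [norm_nonneg Q, norm_nonneg A]
    have c4 : ‖A * Q * (B - A)‖ ≤ (909/10000) * ‖B - A‖ := by
      have := norm_mul_le3 (A * Q) (B - A)
      nlinarith [norm_nonneg (A * Q), norm_nonneg (B - A)]
    have t : ‖(Q - 1) * (B - A) + (B - A) * (Q - 1) + ((B - A) * Q * B + A * Q * (B - A))‖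
        ≤ ‖(Q - 1) * (B - A)‖ + ‖(B - A) * (Q - 1)‖
          + (‖(B - A) * Q * B‖ + ‖A * Q * (B - A)‖) := by
      calc _ ≤ ‖(Q - 1) * (B - A) + (B - A) * (Q - 1)‖
            + ‖(B - A) * Q * B + A * Q * (B - A)‖ := norm_add_le _ _
        _ ≤ _ := by gcongr <;> exact norm_add_le _ _
    have hrev : ‖B - A‖ = ‖A - B‖ := norm_sub_rev _ _
    rw [hdiff, norm_smul, Real.norm_eq_abs]
    have habs : |(1/2 : ℝ)| = 1/2 := by norm_num
    rw [habs]
    have hnn := norm_nonneg (A - B)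
    linarith
  -- set up the fixed point theorem on the subtype K
  haveI : Nonempty K := ⟨⟨0, Matrix.transpose_zero, by simp⟩⟩
  haveI : @CompleteSpace K (PseudoMetricSpace.toUniformSpace) := hKc.completeSpace_coe
  set g : K → K := fun a => ⟨f a.1, hmaps a.1 a.2⟩ with hg
  have hc : ContractingWith (1/4 : NNReal) g := by
    refine ⟨by rw [← NNReal.coe_lt_coe]; push_cast; norm_num, LipschitzWith.of_dist_le_mul fun a b => ?_⟩
    have := hlip a.1 a.2 b.1 b.2
    simp only [Subtype.dist_eq, dist_eq_norm]
    simpa using this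
  set A₀ : K := ContractingWith.fixedPoint g hc with hA₀
  have hfix : f A₀.1 = A₀.1 := congrArg Subtype.val hc.fixedPoint_isFixedPt
  refine ⟨A₀.1, ⟨A₀.2.1, A₀.2.2, (hiff _).mpr hfix⟩, ?_⟩
  rintro B ⟨hBs, hBn, hBeq⟩
  have hBK : B ∈ K := ⟨hBs, hBn⟩
  have hBfix : Function.IsFixedPt g ⟨B, hBK⟩ :=
    Subtype.ext ((hiff B).mp hBeq)
  have := hc.fixedPoint_unique hBfix
  exact congrArg Subtype.val this
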